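/- For every closed xCL term t and every value v: t ⇓ v in the call-by-value big-step semantics if and only if t →* v in the modified call-by-value small-step system with rules (a1), (a2), (b), (c). -/

import Mathlib

/-- Closed terms of extended combinatory logic (xCL). -/
inductive Tm : Type
  | S : Tm
  | K : Tm
  | I : Tm
  | S1 : Tm → Tm
  | K1 : Tm → Tm
  | S2 : Tm → Tm → Tm
  | app : Tm → Tm → Tm

/-- A term is a value iff its topmost constructor is one of `S, K, I, S', K', S''`. -/
def Tm.IsValue : Tm → Prop
  | .app _ _ => False
  | _ => True

/-- Labeled transitions `t ─s→ t'` of call-by-name xCL. -/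
inductive LStep : Tm → Tm → Tm → Prop
  | S (t : Tm) : LStep .S t (.S1 t)
  | S1 (t s : Tm) : LStep (.S1 t) s (.S2 t s)
  | S2 (t s r : Tm) : LStep (.S2 t s) r (.app (.app t r) (.app s r))
  | K (t : Tm) : LStep .K t (.K1 t)
  | K1 (t s : Tm) : LStep (.K1 t) s t
  | I (t : Tm) : LStep .I t t

/-- Unlabeled small-step transitions `t → t'` of call-by-name xCL. -/
inductive Step : Tm → Tm → Prop
  | appL {t t' : Tm} (s : Tm) : Step t t' → Step (.app t s) (.app t' s)
  | beta {t t' s : Tm} : LStep t s t' → Step (.app t s) t'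

/-- Call-by-value big-step semantics `t ⇓ v` of xCL. -/
inductive BigV : Tm → Tm → Prop
  | val {v : Tm} : v.IsValue → BigV v v
  | appI {s t v : Tm} : BigV s .I → BigV t v → BigV (.app s t) v
  | appK {s t w : Tm} : BigV s .K → BigV t w → BigV (.app s t) (.K1 w)
  | appS {s t w : Tm} : BigV s .S → BigV t w → BigV (.app s t) (.S1 w)
  | appK1 {s t r w v : Tm} : BigV s (.K1 r) → BigV t w → BigV r v → BigV (.app s t) v
  | appS1 {s t r w : Tm} : BigV s (.S1 r) → BigV t w → BigV (.app s t) (.S2 r w)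
  | appS2 {s t r q w v : Tm} :
      BigV s (.S2 r q) → BigV t w → BigV (.app (.app r w) (.app q w)) v → BigV (.app s t) v

/-- The original call-by-value small-step system with rules (a), (b), (c). -/
inductive StepA : Tm → Tm → Prop
  | a {t t' : Tm} (s : Tm) : StepA t t' → StepA (.app t s) (.app t' s)
  | b {t s s' : Tm} : t.IsValue → StepA s s' → StepA (.app t s) (.app t s')
  | c {t s t' : Tm} : s.IsValue → LStep t s t' → StepA (.app t s) t'

/-- The modified call-by-value small-step system with rules (a1), (a2), (b), (c). -/
inductive StepB : Tm → Tm → Prop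
  | a1 {t t' s s' : Tm} : StepB t t' → StepB s s' → StepB (.app t s) (.app t' s')
  | a2 {t t' s : Tm} : StepB t t' → s.IsValue → StepB (.app t s) (.app t' s)
  | b {t s s' : Tm} : t.IsValue → StepB s s' → StepB (.app t s) (.app t s')
  | c {t s t' : Tm} : s.IsValue → LStep t s t' → StepB (.app t s) t'

lemma bigv_value {t v : Tm} (h : BigV t v) : v.IsValue := by
  induction h with
  | val h => exact h
  | appI _ _ _ ih => exact ih
  | appK => trivial
  | appS => trivial
  | appK1 _ _ _ _ _ ih => exact ih
  | appS1 => trivial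
  | appS2 _ _ _ _ _ ih => exact ih

lemma par {t t' : Tm} (ht : Relation.ReflTransGen StepB t t') :
    ∀ {s s' : Tm}, Relation.ReflTransGen StepB s s' → t'.IsValue → s'.IsValue →
      Relation.ReflTransGen StepB (t.app s) (t'.app s') := by
  induction ht using Relation.ReflTransGen.head_induction_on with
  | refl =>
    intro s s' hs hv hw
    exact Relation.ReflTransGen.lift (Tm.app t') (fun a b h => StepB.b hv h) _ _ hs
  | head h _ ih =>
    intro s s' hs hv hw
    rcases hs.cases_head with rfl | ⟨s1, hs1, hs1'⟩
    · exact Relation.ReflTransGen.head (StepB.a2 h hw) (ih Relation.ReflTransGen.refl hv hw)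
    · exact Relation.ReflTransGen.head (StepB.a1 h hs1) (ih hs1' hv hw)

lemma bigv_to_steps {t v : Tm} (h : BigV t v) : Relation.ReflTransGen StepB t v := by
  induction h with
  | val => exact .refl
  | appI hs ht ihs iht =>
    exact (par ihs iht trivial (bigv_value ht)).tail (StepB.c (bigv_value ht) (.I _))
  | appK hs ht ihs iht =>
    exact (par ihs iht trivial (bigv_value ht)).tail (StepB.c (bigv_value ht) (.K _))
  | appS hs ht ihs iht =>
    exact (par ihs iht trivial (bigv_value ht)).tail (StepB.c (bigv_value ht) (.S _))
  | appK1 hs ht hr ihs iht ihr =>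
    exact ((par ihs iht trivial (bigv_value ht)).tail
      (StepB.c (bigv_value ht) (.K1 _ _))).trans ihr
  | appS1 hs ht ihs iht =>
    exact (par ihs iht trivial (bigv_value ht)).tail (StepB.c (bigv_value ht) (.S1 _ _))
  | appS2 hs ht hv ihs iht ihv =>
    exact ((par ihs iht trivial (bigv_value ht)).tail
      (StepB.c (bigv_value ht) (.S2 _ _ _))).trans ihv

lemma step_bigv {t t' : Tm} (h : StepB t t') : ∀ {v : Tm}, BigV t' v → BigV t v := by
  induction h with
  | a1 _ _ ih1 ih2 =>
    intro v hv
    cases hv with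
    | val h => exact absurd h id
    | appI h1 h2 => exact .appI (ih1 h1) (ih2 h2)
    | appK h1 h2 => exact .appK (ih1 h1) (ih2 h2)
    | appS h1 h2 => exact .appS (ih1 h1) (ih2 h2)
    | appK1 h1 h2 h3 => exact .appK1 (ih1 h1) (ih2 h2) h3
    | appS1 h1 h2 => exact .appS1 (ih1 h1) (ih2 h2)
    | appS2 h1 h2 h3 => exact .appS2 (ih1 h1) (ih2 h2) h3
  | a2 _ _ ih =>
    intro v hv
    cases hv with
    | val h => exact absurd h id
    | appI h1 h2 => exact .appI (ih h1) h2
    | appK h1 h2 => exact .appK (ih h1) h2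
    | appS h1 h2 => exact .appS (ih h1) h2
    | appK1 h1 h2 h3 => exact .appK1 (ih h1) h2 h3
    | appS1 h1 h2 => exact .appS1 (ih h1) h2
    | appS2 h1 h2 h3 => exact .appS2 (ih h1) h2 h3
  | b hval _ ih =>
    intro v hv
    cases hv with
    | val h => exact absurd h id
    | appI h1 h2 => exact .appI h1 (ih h2)
    | appK h1 h2 => exact .appK h1 (ih h2)
    | appS h1 h2 => exact .appS h1 (ih h2)
    | appK1 h1 h2 h3 => exact .appK1 h1 (ih h2) h3
    | appS1 h1 h2 => exact .appS1 h1 (ih h2)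
    | appS2 h1 h2 h3 => exact .appS2 h1 (ih h2) h3
  | c hval hl =>
    intro v hv
    cases hl with
    | S t =>
      cases hv with
      | val => exact .appS (.val trivial) (.val hval)
    | S1 a t =>
      cases hv with
      | val => exact .appS1 (.val trivial) (.val hval)
    | S2 a b t =>
      exact .appS2 (.val trivial) (.val hval) hv
    | K t =>
      cases hv with
      | val => exact .appK (.val trivial) (.val hval)
    | K1 a t =>
      exact .appK1 (.val trivial) (.val hval) hv
    | I t =>
      exact .appI (.val trivial) hv

/-- Call-by-value big-step/small-step equivalence for the modified system
(a1)(a2)(b)(c): `t ⇓ v` iff `t →* v`. -/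
theorem xCL_cbv_big_iff_modified_small (t v : Tm) (hv : v.IsValue) :
    BigV t v ↔ Relation.ReflTransGen StepB t v := by
  constructor
  · exact bigv_to_steps
  · intro h
    induction h using Relation.ReflTransGen.head_induction_on with
    | refl => exact .val hv
    | head h _ ih => exact step_bigv h ih
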